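/- arXiv:2001.05953 — 3 statements merged into one kernel-verified Lean document; each statement's English description precedes it below -/
import Mathlib

section
/- Let F, G, H, I be finite groups, and let U be a subgroup of F × G, V a subgroup of G × H, and W a subgroup of H × I. Then |Γ∩(U,V)| · |Γ∩(U*V, W)| = |Γ∩(U, V*W)| · |Γ∩(V,W)|. -/
open scoped Pointwise

section StarPrelude

variable {F G H I : Type*} [Group F] [Group G] [Group H] [Group I]
variable {A : Type*} [CommGroup A]

/-- The star product of subgroups `U ≤ F × G` and `V ≤ G × H`. -/
def starProd (U : Subgroup (F × G)) (V : Subgroup (G × H)) : Subgroup (F × H) where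
  carrier := {p | ∃ g : G, (p.1, g) ∈ U ∧ (g, p.2) ∈ V}
  one_mem' := ⟨1, U.one_mem, V.one_mem⟩
  mul_mem' := by
    rintro ⟨a, b⟩ ⟨c, d⟩ ⟨g, h1, h2⟩ ⟨g', h1', h2'⟩
    exact ⟨g * g', U.mul_mem h1 h1', V.mul_mem h2 h2'⟩
  inv_mem' := by
    rintro ⟨a, b⟩ ⟨g, h1, h2⟩
    exact ⟨g⁻¹, U.inv_mem h1, V.inv_mem h2⟩

infixl:70 " ⋆ " => starProd

theorem mem_starProd {U : Subgroup (F × G)} {V : Subgroup (G × H)} {p : F × H} :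
    p ∈ U ⋆ V ↔ ∃ g : G, (p.1, g) ∈ U ∧ (g, p.2) ∈ V := Iff.rfl

/-- `Γ(U,V) = {(f,g,h) : (f,g) ∈ U, (g,h) ∈ V}`. -/
def gammaSet (U : Subgroup (F × G)) (V : Subgroup (G × H)) : Set (F × G × H) :=
  {p | (p.1, p.2.1) ∈ U ∧ (p.2.1, p.2.2) ∈ V}

/-- `Γ∩(U,V) = {g ∈ G : (1,g) ∈ U and (g,1) ∈ V}`. -/
def gammaCap (U : Subgroup (F × G)) (V : Subgroup (G × H)) : Set G :=
  {g | ((1 : F), g) ∈ U ∧ (g, (1 : H)) ∈ V}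

/-- `p₁(U)`, the image of `U ≤ F × G` in `F`. -/
def proj1 (U : Subgroup (F × G)) : Subgroup F := U.map (MonoidHom.fst F G)

/-- `p₂(U)`, the image of `U ≤ F × G` in `G`. -/
def proj2 (U : Subgroup (F × G)) : Subgroup G := U.map (MonoidHom.snd F G)

/-- `k₁(U) = {f : (f,1) ∈ U}`. -/
def ker1 (U : Subgroup (F × G)) : Set F := {f | (f, (1 : G)) ∈ U}

/-- `k₂(U) = {g : (1,g) ∈ U}`. -/
def ker2 (U : Subgroup (F × G)) : Set G := {g | ((1 : F), g) ∈ U}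

end StarPrelude

section StarAux

variable {F G H I : Type*} [Group F] [Group G] [Group H] [Group I]

/-- The auxiliary subgroup `{(g,h) : (1,g) ∈ U, (g,h) ∈ V, (h,1) ∈ W}` of `G × H`. -/
def midGroup (U : Subgroup (F × G)) (V : Subgroup (G × H)) (W : Subgroup (H × I)) :
    Subgroup (G × H) where
  carrier := {p | ((1 : F), p.1) ∈ U ∧ p ∈ V ∧ (p.2, (1 : I)) ∈ W}
  one_mem' := ⟨U.one_mem, V.one_mem, W.one_mem⟩
  mul_mem' := by
    rintro ⟨a, b⟩ ⟨c, d⟩ ⟨h1, h2, h3⟩ ⟨h1', h2', h3'⟩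
    refine ⟨?_, V.mul_mem h2 h2', ?_⟩
    · simpa using U.mul_mem h1 h1'
    · simpa using W.mul_mem h3 h3'
  inv_mem' := by
    rintro ⟨a, b⟩ ⟨h1, h2, h3⟩
    refine ⟨?_, V.inv_mem h2, ?_⟩
    · simpa using U.inv_mem h1
    · simpa using W.inv_mem h3

theorem mem_midGroup {U : Subgroup (F × G)} {V : Subgroup (G × H)} {W : Subgroup (H × I)}
    {p : G × H} : p ∈ midGroup U V W ↔
      ((1 : F), p.1) ∈ U ∧ p ∈ V ∧ (p.2, (1 : I)) ∈ W := Iff.rfl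

set_option linter.unusedSectionVars false

theorem card_mid_left (U : Subgroup (F × G)) (V : Subgroup (G × H)) (W : Subgroup (H × I)) :
    Nat.card (midGroup U V W) =
      Nat.card (gammaCap (U ⋆ V) W) * Nat.card (gammaCap U V) := by
  set M := midGroup U V W
  let φ : M →* H := (MonoidHom.snd G H).comp M.subtype
  have h1 : Nat.card M = Nat.card (M ⧸ φ.ker) * Nat.card φ.ker :=
    Subgroup.card_eq_card_quotient_mul_card_subgroup φ.ker
  have h2 : Nat.card (M ⧸ φ.ker) = Nat.card φ.range :=
    Nat.card_congr (QuotientGroup.quotientKerEquivRange φ).toEquiv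
  have hr : Nat.card φ.range = Nat.card (gammaCap (U ⋆ V) W) := by
    apply Nat.card_congr
    apply Equiv.subtypeEquiv (Equiv.refl H)
    intro h
    simp only [Equiv.refl_apply]
    constructor
    · rintro ⟨⟨⟨g, h'⟩, hg, hv, hw⟩, rfl⟩
      exact ⟨⟨g, hg, hv⟩, hw⟩
    · rintro ⟨⟨g, hg, hv⟩, hw⟩
      exact ⟨⟨⟨g, h⟩, hg, hv, hw⟩, rfl⟩
  have hk : Nat.card φ.ker = Nat.card (gammaCap U V) := by
    apply Nat.card_congr
    refine ⟨fun x => ⟨x.1.1.1, ?_⟩, fun g => ⟨⟨((g : G), (1 : H)), ⟨?_, ?_, ?_⟩⟩, rfl⟩, ?_, ?_⟩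
    · obtain ⟨⟨⟨g, h⟩, hg, hv, hw⟩, hker⟩ := x
      have hh : h = 1 := hker
      subst hh
      exact ⟨hg, hv⟩
    · exact g.2.1
    · exact g.2.2
    · exact W.one_mem
    · rintro ⟨⟨⟨g, h⟩, hm⟩, hker⟩
      have hh : h = 1 := hker
      subst hh
      rfl
    · intro g
      rfl
  rw [h1, h2, hr, hk]

theorem card_mid_right (U : Subgroup (F × G)) (V : Subgroup (G × H)) (W : Subgroup (H × I)) :
    Nat.card (midGroup U V W) =
      Nat.card (gammaCap U (V ⋆ W)) * Nat.card (gammaCap V W) := by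
  set M := midGroup U V W
  let φ : M →* G := (MonoidHom.fst G H).comp M.subtype
  have h1 : Nat.card M = Nat.card (M ⧸ φ.ker) * Nat.card φ.ker :=
    Subgroup.card_eq_card_quotient_mul_card_subgroup φ.ker
  have h2 : Nat.card (M ⧸ φ.ker) = Nat.card φ.range :=
    Nat.card_congr (QuotientGroup.quotientKerEquivRange φ).toEquiv
  have hr : Nat.card φ.range = Nat.card (gammaCap U (V ⋆ W)) := by
    apply Nat.card_congr
    apply Equiv.subtypeEquiv (Equiv.refl G)
    intro g
    simp only [Equiv.refl_apply]
    constructor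
    · rintro ⟨⟨⟨g', h⟩, hg, hv, hw⟩, rfl⟩
      exact ⟨hg, ⟨h, hv, hw⟩⟩
    · rintro ⟨hg, ⟨h, hv, hw⟩⟩
      exact ⟨⟨⟨g, h⟩, hg, hv, hw⟩, rfl⟩
  have hk : Nat.card φ.ker = Nat.card (gammaCap V W) := by
    apply Nat.card_congr
    refine ⟨fun x => ⟨x.1.1.2, ?_⟩, fun h => ⟨⟨((1 : G), (h : H)), ⟨?_, ?_, ?_⟩⟩, rfl⟩, ?_, ?_⟩
    · obtain ⟨⟨⟨g, h⟩, hg, hv, hw⟩, hker⟩ := x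
      have hh : g = 1 := hker
      subst hh
      exact ⟨hv, hw⟩
    · exact U.one_mem
    · exact h.2.1
    · exact h.2.2
    · rintro ⟨⟨⟨g, h⟩, hm⟩, hker⟩
      have hh : g = 1 := hker
      subst hh
      rfl
    · intro h
      rfl
  rw [h1, h2, hr, hk]

end StarAux

/-- Boltje–Danz. For finite groups `F, G, H, I` and subgroups
`U ≤ F × G`, `V ≤ G × H`, `W ≤ H × I`:
`|Γ∩(U,V)| · |Γ∩(U*V, W)| = |Γ∩(U, V*W)| · |Γ∩(V,W)|`. -/
theorem stmt0 {F G H I : Type*} [Group F] [Group G] [Group H] [Group I]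
    [Finite F] [Finite G] [Finite H] [Finite I]
    (U : Subgroup (F × G)) (V : Subgroup (G × H)) (W : Subgroup (H × I)) :
    Nat.card (gammaCap U V) * Nat.card (gammaCap (U ⋆ V) W) =
      Nat.card (gammaCap U (V ⋆ W)) * Nat.card (gammaCap V W) := by
  rw [Nat.mul_comm, ← card_mid_left U V W, card_mid_right U V W]
end

section
/- Let F, G, H be finite groups, U a subgroup of F × G, and V a subgroup of G × H. Then |Γ(U,V)| = |p₂(U) ∩ p₁(V)| · |k₁(U)| · |k₂(V)|. -/
open scoped Pointwise

section StarPrelude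

variable {F G H I : Type*} [Group F] [Group G] [Group H] [Group I]
variable {A : Type*} [CommGroup A]

infixl:70 " ⋆ " => starProd

end StarPrelude

/-- For finite groups `F, G, H` and subgroups `U ≤ F × G`, `V ≤ G × H`:
`|Γ(U,V)| = |p₂(U) ∩ p₁(V)| · |k₁(U)| · |k₂(V)|`. -/
theorem stmt3 {F G H : Type*} [Group F] [Group G] [Group H]
    [Finite F] [Finite G] [Finite H]
    (U : Subgroup (F × G)) (V : Subgroup (G × H)) :
    Nat.card (gammaSet U V) =
      Nat.card ((proj2 U : Set G) ∩ (proj1 V : Set G) : Set G) * Nat.card (ker1 U) *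
        Nat.card (ker2 V) := by
  classical
  set S : Set G := (proj2 U : Set G) ∩ (proj1 V : Set G) with hS
  have hf : ∀ g : S, ∃ f : F, (f, (g : G)) ∈ U := by
    rintro ⟨g, hg, -⟩
    obtain ⟨⟨f, g'⟩, hfg, rfl⟩ := hg
    exact ⟨f, hfg⟩
  have hh : ∀ g : S, ∃ h : H, ((g : G), h) ∈ V := by
    rintro ⟨g, -, hg⟩
    obtain ⟨⟨g', h⟩, hgh, rfl⟩ := hg
    exact ⟨h, hgh⟩
  choose f₀ hf₀ using hf
  choose h₀ hh₀ using hh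
  have memS : ∀ p : F × G × H, p ∈ gammaSet U V → p.2.1 ∈ S := by
    rintro ⟨f, g, h⟩ ⟨hU, hV⟩
    exact ⟨⟨(f, g), hU, rfl⟩, ⟨(g, h), hV, rfl⟩⟩
  have e : gammaSet U V ≃ S × ker1 U × ker2 V := by
    refine
      { toFun := fun p =>
          ⟨⟨p.1.2.1, memS p.1 p.2⟩,
           ⟨p.1.1 * (f₀ ⟨p.1.2.1, memS p.1 p.2⟩)⁻¹, ?_⟩,
           ⟨(h₀ ⟨p.1.2.1, memS p.1 p.2⟩)⁻¹ * p.1.2.2, ?_⟩⟩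
        invFun := fun q =>
          ⟨(q.2.1.1 * f₀ q.1, (q.1 : G), h₀ q.1 * q.2.2.1), ?_, ?_⟩
        left_inv := ?_
        right_inv := ?_ }
    · obtain ⟨⟨f, g, h⟩, hU, hV⟩ := p
      have := U.mul_mem hU (U.inv_mem (hf₀ ⟨g, memS (f, g, h) ⟨hU, hV⟩⟩))
      simpa [ker1, Prod.ext_iff] using this
    · obtain ⟨⟨f, g, h⟩, hU, hV⟩ := p
      have := V.mul_mem (V.inv_mem (hh₀ ⟨g, memS (f, g, h) ⟨hU, hV⟩⟩)) hV
      simpa [ker2, Prod.ext_iff] using this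
    · have := U.mul_mem q.2.1.2 (hf₀ q.1)
      simpa [ker1, Prod.ext_iff] using this
    · have := V.mul_mem (hh₀ q.1) q.2.2.2
      simpa [ker2, Prod.ext_iff] using this
    · rintro ⟨⟨f, g, h⟩, hp⟩
      simp [Prod.ext_iff]
    · rintro ⟨⟨g, hg⟩, ⟨f, hfk⟩, ⟨h, hhk⟩⟩
      simp [Prod.ext_iff]
  rw [Nat.card_congr e, Nat.card_prod, Nat.card_prod, mul_assoc]
end

section
/- Let F, G, H be finite groups, U a subgroup of F × G, and V a subgroup of G × H. Then |U| · |V| = |Γ(U,V)| · |p₂(U)·p₁(V)|, where p₂(U)·p₁(V) denotes the product subset {g·g' : g ∈ p₂(U), g' ∈ p₁(V)} of G. -/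
open scoped Pointwise

section StarPrelude

variable {F G H I : Type*} [Group F] [Group G] [Group H] [Group I]
variable {A : Type*} [CommGroup A]

infixl:70 " ⋆ " => starProd

end StarPrelude


/-- Fiber-counting: if every fiber of `f` over its range has cardinality `c`, then
`|α| = |range f| * c`. -/
lemma card_eq_card_range_mul_of_fibers {α β : Type*} [Finite α] [Finite β] (f : α → β)
    (c : ℕ) (h : ∀ b ∈ Set.range f, Nat.card (f ⁻¹' {b}) = c) :
    Nat.card α = Nat.card (Set.range f) * c := by
  classical
  have _ : Fintype α := Fintype.ofFinite α
  have _ : Fintype β := Fintype.ofFinite β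
  have hfib : ∀ b : β, Nat.card (f ⁻¹' {b}) = (Finset.univ.filter fun a => f a = b).card := by
    intro b
    rw [Nat.card_eq_fintype_card, ← Set.toFinset_card]
    congr 1
    ext a
    simp [Set.mem_toFinset]
  have key : Fintype.card α =
      ∑ b ∈ Finset.univ.image f, (Finset.univ.filter fun a => f a = b).card :=
    Finset.card_eq_sum_card_fiberwise fun a _ => Finset.mem_image_of_mem f (Finset.mem_univ a)
  have hconst : ∀ b ∈ Finset.univ.image f, (Finset.univ.filter fun a => f a = b).card = c := by
    intro b hb
    rw [Finset.mem_image] at hb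
    obtain ⟨a, _, rfl⟩ := hb
    rw [← hfib]
    exact h _ ⟨a, rfl⟩
  rw [Nat.card_eq_fintype_card, key, Finset.sum_congr rfl hconst, Finset.sum_const,
    smul_eq_mul]
  congr 1
  rw [Nat.card_eq_fintype_card, ← Set.toFinset_card]
  congr 1
  ext b
  simp [Set.mem_toFinset, Set.mem_range, eq_comm]

/-- For finite groups `F, G, H` and subgroups `U ≤ F × G`, `V ≤ G × H`:
`|U| · |V| = |Γ(U,V)| · |p₂(U)·p₁(V)|`. -/
theorem stmt4 {F G H : Type*} [Group F] [Group G] [Group H]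
    [Finite F] [Finite G] [Finite H]
    (U : Subgroup (F × G)) (V : Subgroup (G × H)) :
    Nat.card U * Nat.card V =
      Nat.card (gammaSet U V) * Nat.card ((proj2 U : Set G) * (proj1 V : Set G)) := by
  classical
  set φ : U × V → G := fun x => ((x.1 : F × G).2)⁻¹ * (x.2 : G × H).1 with hφ
  have hrange : Set.range φ = (proj2 U : Set G) * (proj1 V : Set G) := by
    ext g
    constructor
    · rintro ⟨⟨u, v⟩, rfl⟩
      refine ⟨((u : F × G).2)⁻¹, ?_, (v : G × H).1, ?_, rfl⟩
      · exact inv_mem ⟨u.1, u.2, rfl⟩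
      · exact ⟨v.1, v.2, rfl⟩
    · rintro ⟨a, ha, b, hb, rfl⟩
      obtain ⟨u, hu, hu2⟩ := ha
      obtain ⟨v, hv, hv1⟩ := hb
      refine ⟨(⟨u⁻¹, U.inv_mem hu⟩, ⟨v, hv⟩), ?_⟩
      simp only [hφ]
      simp only [Prod.snd_inv, inv_inv]
      exact congrArg₂ (· * ·) hu2 hv1
  have hfiber : ∀ y ∈ Set.range φ, Nat.card (φ ⁻¹' {y}) = Nat.card (gammaSet U V) := by
    rintro y ⟨⟨u₀, v₀⟩, hy0⟩
    refine (Nat.card_eq_of_bijective (fun p : gammaSet U V =>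
      (⟨(⟨((p : F × G × H).1, (p : F × G × H).2.1) * (u₀ : F × G),
          U.mul_mem p.2.1 u₀.2⟩,
        ⟨((p : F × G × H).2.1, (p : F × G × H).2.2) * (v₀ : G × H),
          V.mul_mem p.2.2 v₀.2⟩),
        by
          simp only [Set.mem_preimage, Set.mem_singleton_iff]
          rw [← hy0]
          simp [hφ, Prod.mul_def, mul_inv_rev, mul_assoc]⟩ : φ ⁻¹' {y})) ⟨?_, ?_⟩).symm
    · rintro ⟨⟨f, g, h⟩, h1, h2⟩ ⟨⟨f', g', h'⟩, h1', h2'⟩ heq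
      simp only [Subtype.mk_eq_mk, Prod.mk.injEq, Prod.ext_iff, Subtype.ext_iff] at heq ⊢
      obtain ⟨⟨hf, hg⟩, _, hh⟩ := heq
      exact ⟨mul_right_cancel hf, mul_right_cancel hg, mul_right_cancel hh⟩
    · rintro ⟨⟨u, v⟩, hy⟩
      simp only [Set.mem_preimage, Set.mem_singleton_iff, hφ, ← hy0] at hy
      have hv1 : (v : G × H).1 = (u : F × G).2 * ((u₀ : F × G).2)⁻¹ * (v₀ : G × H).1 := by
        rw [mul_assoc, ← hy, mul_inv_cancel_left]
      have h21 : (u : F × G).2 * ((u₀ : F × G).2)⁻¹ = (v : G × H).1 * ((v₀ : G × H).1)⁻¹ := by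
        rw [hv1, mul_inv_cancel_right]
      have hmemU : ((u : F × G).1 * ((u₀ : F × G).1)⁻¹,
          (u : F × G).2 * ((u₀ : F × G).2)⁻¹) ∈ U := by
        have := U.mul_mem u.2 (U.inv_mem u₀.2)
        simpa [Prod.mul_def] using this
      have hmemV : ((u : F × G).2 * ((u₀ : F × G).2)⁻¹,
          (v : G × H).2 * ((v₀ : G × H).2)⁻¹) ∈ V := by
        rw [h21]
        have := V.mul_mem v.2 (V.inv_mem v₀.2)
        simpa [Prod.mul_def] using this
      refine ⟨⟨((u : F × G).1 * ((u₀ : F × G).1)⁻¹,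
        (u : F × G).2 * ((u₀ : F × G).2)⁻¹,
        (v : G × H).2 * ((v₀ : G × H).2)⁻¹), hmemU, hmemV⟩, ?_⟩
      ext <;> simp [hv1.symm]
  have main := card_eq_card_range_mul_of_fibers φ (Nat.card (gammaSet U V)) hfiber
  rw [Nat.card_prod] at main
  rw [main, hrange, mul_comm]
end
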